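/- Fix m > 6. Then there exists ε₁ > 0 such that for every ε ∈ (0,ε₁) the equation D_ε(λ;m) = 0 admits a solution λ ∈ ℂ ∖ (−∞,−1/4] with Re λ > 0. -/

import Mathlib

open Complex

/-- Principal branch of the complex square root. -/
noncomputable def csqrt (z : ℂ) : ℂ := z ^ (1/2 : ℂ)

lemma csqrt_one : csqrt 1 = 1 := by simp [csqrt]

lemma sq_csqrt (z : ℂ) : csqrt z ^ 2 = z := by
  by_cases hz : z = 0
  · simp [csqrt, hz, Complex.zero_cpow (by norm_num : (1/2:ℂ) ≠ 0)]
  · rw [csqrt, sq, ← Complex.cpow_add _ _ hz]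
    norm_num

lemma re_csqrt_nonneg (z : ℂ) : 0 ≤ (csqrt z).re := by
  by_cases hz : z = 0
  · simp [csqrt, hz, Complex.zero_cpow (by norm_num : (1/2:ℂ) ≠ 0)]
  · rw [csqrt, Complex.cpow_def_of_ne_zero hz, Complex.exp_re]
    apply mul_nonneg (Real.exp_nonneg _)
    apply Real.cos_nonneg_of_mem_Icc
    have h1 := Complex.neg_pi_lt_arg z
    have h2 := Complex.arg_le_pi z
    have h3 : (Complex.log z * (1/2)).im = z.arg / 2 := by
      simp [Complex.mul_im, Complex.log_im]
      ring
    rw [h3]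
    constructor <;> [linarith; linarith]

lemma csqrt_add_one_ne_zero (z : ℂ) : csqrt z + 1 ≠ 0 := by
  intro h
  have := congrArg Complex.re h
  simp only [Complex.add_re, Complex.one_re, Complex.zero_re] at this
  have := re_csqrt_nonneg z
  linarith

lemma csqrt_eq_of_sq {t z : ℂ} (h : t ^ 2 = z) (ht : 0 < t.re) : csqrt z = t := by
  have h2 : (csqrt z - t) * (csqrt z + t) = 0 := by
    have := sq_csqrt z
    linear_combination this - h
  rcases mul_eq_zero.1 h2 with h3 | h3
  · linear_combination h3
  · exfalso
    have h4 : csqrt z = -t := by linear_combination h3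
    have := re_csqrt_nonneg z
    rw [h4] at this
    simp only [Complex.neg_re] at this
    linarith

/-- The dispersion relation D_ε(λ;m). -/
noncomputable def dispersion (ε m : ℝ) (l : ℂ) : ℂ :=
  -(1/4) * (csqrt (1 + 4 * ε * (m + ε * m ^ 2 + l)) + csqrt (1 + 4 * ε * l)) *
    ((ε : ℂ)⁻¹ * (csqrt (1 + 4 * ε * (m + ε * m ^ 2 + l)) - 1) + 1 + csqrt (1 + 4 * l)) *
    (1 - csqrt (1 + 4 * l) / (1 + m)) + m + ε * m ^ 2

/-- Regularized version of the dispersion relation, defined also at ε = 0. -/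
noncomputable def Gfun (m ε : ℝ) (l : ℂ) : ℂ :=
  -(1/4) * (csqrt (1 + 4 * ε * (m + ε * m ^ 2 + l)) + csqrt (1 + 4 * ε * l)) *
    (4 * ((m:ℂ) + ε * m ^ 2 + l) / (csqrt (1 + 4 * ε * (m + ε * m ^ 2 + l)) + 1)
       + 1 + csqrt (1 + 4 * l)) *
    (1 - csqrt (1 + 4 * l) / (1 + m)) + m + ε * m ^ 2

lemma dispersion_eq_G {ε : ℝ} (hε : ε ≠ 0) (m : ℝ) (l : ℂ) :
    dispersion ε m l = Gfun m ε l := by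
  have hε' : (ε:ℂ) ≠ 0 := Complex.ofReal_ne_zero.mpr hε
  have hT1 : csqrt (1 + 4 * ε * (m + ε * m ^ 2 + l)) + 1 ≠ 0 := csqrt_add_one_ne_zero _
  have key : (ε : ℂ)⁻¹ * (csqrt (1 + 4 * ε * (m + ε * m ^ 2 + l)) - 1)
      = 4 * ((m:ℂ) + ε * m ^ 2 + l) / (csqrt (1 + 4 * ε * (m + ε * m ^ 2 + l)) + 1) := by
    have hT := sq_csqrt (1 + 4 * (ε:ℂ) * (m + ε * m ^ 2 + l))
    rw [eq_div_iff hT1, mul_assoc, inv_mul_eq_iff_eq_mul₀ hε']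
    linear_combination hT
  rw [dispersion, Gfun, key]

lemma key_ident (m : ℝ) (hm1 : (1:ℂ) + (m:ℂ) ≠ 0) {σ S l : ℂ}
    (hσ : σ ^ 2 = (m:ℂ) ^ 2 - 8 * m) (hS2 : S ^ 2 = 1 + 4 * l) :
    -(1/4) * (1 + 1) * (4 * ((m:ℂ) + 0 * (m:ℂ) ^ 2 + l) / (1 + 1) + 1 + S) *
      (1 - S / (1 + (m:ℂ))) + (m:ℂ) + 0 * (m:ℂ) ^ 2
    = (S - 1) * (S - (((m:ℂ) - 2) + σ)/2) * (S - (((m:ℂ) - 2) - σ)/2) / (4 * (1 + (m:ℂ))) := by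
  obtain rfl : l = (S ^ 2 - 1)/4 := by linear_combination (-1/4 : ℂ) * hS2
  have hq : (S - (((m:ℂ) - 2) + σ)/2) * (S - (((m:ℂ) - 2) - σ)/2)
      = S ^ 2 - ((m:ℂ) - 2) * S + ((m:ℂ) + 1) := by
    linear_combination (-1/4 : ℂ) * hσ
  conv_rhs => rw [mul_assoc, hq]
  field_simp
  ring

lemma G_zero_eq (m : ℝ) (hm1 : (1:ℂ) + (m:ℂ) ≠ 0) {σ : ℂ}
    (hσ : σ ^ 2 = (m:ℂ) ^ 2 - 8 * m) (l : ℂ) :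
    Gfun m 0 l = (csqrt (1 + 4 * l) - 1) * (csqrt (1 + 4 * l) - (((m:ℂ) - 2) + σ)/2) *
      (csqrt (1 + 4 * l) - (((m:ℂ) - 2) - σ)/2) / (4 * (1 + (m:ℂ))) := by
  have h := key_ident m hm1 hσ (sq_csqrt (1 + 4 * l))
  rw [Gfun]
  push_cast
  rw [show (1:ℂ) + 4 * 0 * ((m:ℂ) + 0 * (m:ℂ) ^ 2 + l) = 1 by ring,
      show (1:ℂ) + 4 * 0 * l = 1 by ring, csqrt_one]
  linear_combination h

lemma diffAt_G (m ε : ℝ) (hm1 : (1:ℂ) + (m:ℂ) ≠ 0) {l : ℂ}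
    (h1 : ((1:ℂ) + 4 * ε * ((m:ℂ) + ε * m ^ 2 + l)) ∈ Complex.slitPlane)
    (h2 : ((1:ℂ) + 4 * ε * l) ∈ Complex.slitPlane)
    (h3 : ((1:ℂ) + 4 * l) ∈ Complex.slitPlane) :
    DifferentiableAt ℂ (fun z => Gfun m ε z) l := by
  have d1 : DifferentiableAt ℂ (fun z : ℂ => csqrt (1 + 4 * ε * ((m:ℂ) + ε * m ^ 2 + z))) l := by
    simp only [csqrt]
    exact DifferentiableAt.cpow (by fun_prop) (differentiableAt_const _) h1
  have d2 : DifferentiableAt ℂ (fun z : ℂ => csqrt (1 + 4 * ε * z)) l := by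
    simp only [csqrt]
    exact DifferentiableAt.cpow (by fun_prop) (differentiableAt_const _) h2
  have d3 : DifferentiableAt ℂ (fun z : ℂ => csqrt (1 + 4 * z)) l := by
    simp only [csqrt]
    exact DifferentiableAt.cpow (by fun_prop) (differentiableAt_const _) h3
  simp only [Gfun]
  apply DifferentiableAt.add
  apply DifferentiableAt.add
  apply DifferentiableAt.mul
  apply DifferentiableAt.mul
  · exact (differentiableAt_const _).mul (d1.add d2)
  · apply DifferentiableAt.add
    apply DifferentiableAt.add
    · exact DifferentiableAt.div (by fun_prop) (d1.add (differentiableAt_const _))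
        (csqrt_add_one_ne_zero _)
    · exact differentiableAt_const _
    · exact d3
  · exact (differentiableAt_const _).sub (d3.div (differentiableAt_const _) hm1)
  all_goals exact differentiableAt_const _

lemma contAt_G (m : ℝ) (hm1 : (1:ℂ) + (m:ℂ) ≠ 0) {p : ℝ × ℂ}
    (h1 : ((1:ℂ) + 4 * p.1 * ((m:ℂ) + (p.1:ℝ) * m ^ 2 + p.2)) ∈ Complex.slitPlane)
    (h2 : ((1:ℂ) + 4 * p.1 * p.2) ∈ Complex.slitPlane)
    (h3 : ((1:ℂ) + 4 * p.2) ∈ Complex.slitPlane) :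
    ContinuousAt (fun q : ℝ × ℂ => Gfun m q.1 q.2) p := by
  have c0 : ContinuousAt (fun q : ℝ × ℂ => ((1:ℂ) + 4 * q.1 * ((m:ℂ) + q.1 * m ^ 2 + q.2))) p := by
    fun_prop
  have c0' : ContinuousAt (fun q : ℝ × ℂ => ((1:ℂ) + 4 * q.1 * q.2)) p := by fun_prop
  have c0'' : ContinuousAt (fun q : ℝ × ℂ => ((1:ℂ) + 4 * q.2)) p := by fun_prop
  have c1 : ContinuousAt (fun q : ℝ × ℂ => csqrt (1 + 4 * q.1 * ((m:ℂ) + q.1 * m ^ 2 + q.2))) p :=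
    by simp only [csqrt]; exact c0.cpow continuousAt_const h1
  have c2 : ContinuousAt (fun q : ℝ × ℂ => csqrt (1 + 4 * q.1 * q.2)) p :=
    by simp only [csqrt]; exact c0'.cpow continuousAt_const h2
  have c3 : ContinuousAt (fun q : ℝ × ℂ => csqrt (1 + 4 * q.2)) p :=
    by simp only [csqrt]; exact c0''.cpow continuousAt_const h3
  simp only [Gfun]
  apply ContinuousAt.add
  apply ContinuousAt.add
  apply ContinuousAt.mul
  apply ContinuousAt.mul
  · exact continuousAt_const.mul (c1.add c2)
  · apply ContinuousAt.add
    apply ContinuousAt.add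
    · exact ContinuousAt.div (by fun_prop) (c1.add continuousAt_const)
        (csqrt_add_one_ne_zero _)
    · exact continuousAt_const
    · exact c3
  · exact continuousAt_const.sub (c3.div continuousAt_const hm1)
  · fun_prop
  · fun_prop

/-- for fixed m > 6, there exists ε₁ > 0 such that for each
ε ∈ (0,ε₁) the dispersion relation D_ε(·;m) admits a root
λ ∈ ℂ ∖ (−∞,−1/4] with positive real part. -/
theorem unstable_root_exists (m : ℝ) (hm : 6 < m) :
    ∃ ε₁ > (0:ℝ), ∀ ε ∈ Set.Ioo (0:ℝ) ε₁,
      ∃ l : ℂ, ¬(l.im = 0 ∧ l.re ≤ -(1/4)) ∧ dispersion ε m l = 0 ∧ 0 < l.re := by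
  have hm1 : (1:ℂ) + (m:ℂ) ≠ 0 := by
    intro h
    have := congrArg Complex.re h
    simp only [Complex.add_re, Complex.one_re, Complex.ofReal_re, Complex.zero_re] at this
    linarith
  set σ : ℂ := csqrt ((m:ℂ)^2 - 8*m) with hσdef
  have hσ : σ^2 = (m:ℂ)^2 - 8*(m:ℂ) := sq_csqrt _
  have hσre : 0 ≤ σ.re := re_csqrt_nonneg _
  set sp : ℂ := (((m:ℂ) - 2) + σ)/2 with hspdef
  set sm : ℂ := (((m:ℂ) - 2) - σ)/2 with hsmdef
  set l₀ : ℂ := (sp^2 - 1)/4 with hl₀def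
  set lm : ℂ := (sm^2 - 1)/4 with hlmdef
  have hsp_re : 0 < sp.re := by
    have h2 : (2:ℂ)*sp = ((m:ℂ) - 2) + σ := by rw [hspdef]; ring
    have h3 := congrArg Complex.re h2
    simp only [Complex.mul_re, Complex.add_re, Complex.sub_re, Complex.ofReal_re,
      Complex.one_re, Complex.mul_im] at h3
    norm_num at h3
    linarith
  have hl₀_re : m*(m-6)/8 ≤ l₀.re := by
    have h16 : (16:ℂ)*l₀ = ((2*m^2 - 12*m : ℝ) : ℂ) + 2*((m:ℂ)-2)*σ := by
      rw [hl₀def, hspdef]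
      push_cast
      linear_combination hσ
    have h3 := congrArg Complex.re h16
    simp only [Complex.mul_re, Complex.add_re, Complex.sub_re, Complex.ofReal_re,
      Complex.ofReal_im, Complex.mul_im, Complex.one_re] at h3
    norm_num at h3
    nlinarith [mul_nonneg (by linarith : (0:ℝ) ≤ m - 2) hσre]
  have hl₀re_pos : 0 < l₀.re := lt_of_lt_of_le (by nlinarith) hl₀_re
  have hcsp : csqrt (1 + 4*l₀) = sp := by
    apply csqrt_eq_of_sq _ hsp_re
    rw [hl₀def]; ring
  have hG0 : Gfun m 0 l₀ = 0 := by
    rw [G_zero_eq m hm1 hσ, ← hspdef, ← hsmdef, hcsp]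
    simp
  have hzero_mem : ∀ l : ℂ, Gfun m 0 l = 0 → l = 0 ∨ l = l₀ ∨ l = lm := by
    intro l h0
    rw [G_zero_eq m hm1 hσ, ← hspdef, ← hsmdef, div_eq_zero_iff] at h0
    have hden : (4*(1+(m:ℂ))) ≠ 0 := mul_ne_zero (by norm_num) hm1
    rcases h0 with h0 | h0
    swap
    · exact absurd h0 hden
    have hS2 := sq_csqrt (1 + 4*l)
    rcases mul_eq_zero.1 h0 with h1 | h1
    · rcases mul_eq_zero.1 h1 with h2 | h2
      · left
        have h3 : csqrt (1+4*l) = 1 := by linear_combination h2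
        rw [h3] at hS2
        linear_combination (-1/4 : ℂ) * hS2
      · right; left
        have h3 : csqrt (1+4*l) = sp := by linear_combination h2
        rw [h3] at hS2
        rw [hl₀def]
        linear_combination (-1/4 : ℂ) * hS2
    · right; right
      have h3 : csqrt (1+4*l) = sm := by linear_combination h1
      rw [h3] at hS2
      rw [hlmdef]
      linear_combination (-1/4 : ℂ) * hS2
  -- radius
  have hl₀ne : l₀ ≠ 0 := by
    intro h
    rw [h] at hl₀re_pos
    simp at hl₀re_pos
  set dd : ℝ := if l₀ = lm then 1 else ‖l₀ - lm‖ with hdddef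
  have hdd : 0 < dd := by
    by_cases h : l₀ = lm
    · simp [hdddef, h]
    · simp only [hdddef, if_neg h]
      exact norm_pos_iff.mpr (sub_ne_zero.mpr h)
  set r : ℝ := min (min (l₀.re) (‖l₀‖)) dd / 2 with hrdef
  have habs₀ : 0 < ‖l₀‖ := norm_pos_iff.mpr hl₀ne
  have hr : 0 < r := by
    apply div_pos _ two_pos
    exact lt_min (lt_min hl₀re_pos habs₀) hdd
  have hr_re : r ≤ l₀.re/2 := by
    rw [hrdef]
    have : min (min (l₀.re) (‖l₀‖)) dd ≤ l₀.re := (min_le_left _ _).trans (min_le_left _ _)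
    linarith
  have hr_abs : r < ‖l₀‖ := by
    rw [hrdef]
    have : min (min (l₀.re) (‖l₀‖)) dd ≤ ‖l₀‖ :=
      (min_le_left _ _).trans (min_le_right _ _)
    linarith
  have hr_dd : r < dd := by
    rw [hrdef]
    have : min (min (l₀.re) (‖l₀‖)) dd ≤ dd := min_le_right _ _
    linarith
  have hball_re : ∀ l ∈ Metric.closedBall l₀ r, l₀.re/2 ≤ l.re := by
    intro l hl
    rw [Metric.mem_closedBall, Complex.dist_eq] at hl
    have h2 : |(l - l₀).re| ≤ ‖l - l₀‖ := Complex.abs_re_le_norm _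
    rw [Complex.sub_re] at h2
    have h3 := abs_le.1 (h2.trans hl)
    linarith [h3.1]
  have hball_slit : ∀ l ∈ Metric.closedBall l₀ r, ((1:ℂ) + 4*l) ∈ Complex.slitPlane := by
    intro l hl
    apply Complex.mem_slitPlane_iff.mpr
    left
    have := hball_re l hl
    simp only [Complex.add_re, Complex.one_re, Complex.mul_re]
    norm_num
    linarith
  have hone_slit : (1:ℂ) ∈ Complex.slitPlane := Complex.mem_slitPlane_iff.mpr (by norm_num)
  -- the sphere avoids all zeros of Gfun m 0
  have hsph_ne_zero : ∀ l ∈ Metric.sphere l₀ r, Gfun m 0 l ≠ 0 := by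
    intro l hl h0
    rw [Metric.mem_sphere, Complex.dist_eq] at hl
    rcases hzero_mem l h0 with rfl | rfl | rfl
    · rw [show (0:ℂ) - l₀ = -l₀ by ring, norm_neg] at hl
      linarith [hr_abs, hl.ge]
    · simp at hl
      linarith
    · by_cases h : l₀ = lm
      · rw [← h, sub_self] at hl
        simp at hl
        linarith
      · rw [hdddef, if_neg h] at hr_dd
        rw [show lm - l₀ = -(l₀ - lm) by ring, norm_neg] at hl
        linarith [hr_dd, hl.ge]
  -- minimum of ‖Gfun m 0 ·‖ on the sphere
  have hdiff0 : ∀ l ∈ Metric.closedBall l₀ r, DifferentiableAt ℂ (fun z => Gfun m 0 z) l := by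
    intro l hl
    apply diffAt_G m 0 hm1
    · norm_num [Complex.mem_slitPlane_iff]
    · norm_num [Complex.mem_slitPlane_iff]
    · exact hball_slit l hl
  have hcont0 : ContinuousOn (fun l => ‖Gfun m 0 l‖) (Metric.sphere l₀ r) := by
    intro l hl
    exact ((hdiff0 l (Metric.sphere_subset_closedBall hl)).continuousAt.norm).continuousWithinAt
  have hsph_nonempty : (Metric.sphere l₀ r).Nonempty := NormedSpace.sphere_nonempty.mpr hr.le
  obtain ⟨w, hw, hwmin⟩ := (isCompact_sphere l₀ r).exists_isMinOn hsph_nonempty hcont0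
  set δ : ℝ := ‖Gfun m 0 w‖ with hδdef
  have hδpos : 0 < δ := by
    rw [hδdef, norm_pos_iff]
    exact hsph_ne_zero w hw
  have hδle : ∀ z ∈ Metric.sphere l₀ r, δ ≤ ‖Gfun m 0 z‖ := fun z hz => hwmin hz
  -- tube lemma
  set V : Set (ℝ × ℂ) := {p : ℝ × ℂ |
      ((1:ℂ) + 4 * p.1 * ((m:ℂ) + p.1 * m ^ 2 + p.2)) ∈ Complex.slitPlane ∧
      ((1:ℂ) + 4 * p.1 * p.2) ∈ Complex.slitPlane ∧
      ((1:ℂ) + 4 * p.2) ∈ Complex.slitPlane} with hVdef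
  have hVopen : IsOpen V := by
    rw [hVdef]
    rw [Set.setOf_and, Set.setOf_and]
    apply IsOpen.inter
    · exact Complex.isOpen_slitPlane.preimage (by fun_prop)
    apply IsOpen.inter
    · exact Complex.isOpen_slitPlane.preimage (by fun_prop)
    · exact Complex.isOpen_slitPlane.preimage (by fun_prop)
  set U : Set (ℝ × ℂ) := V ∩ ((fun p : ℝ × ℂ => ‖Gfun m p.1 p.2 - Gfun m 0 p.2‖) ⁻¹'
      (Set.Iio (δ/2))) with hUdef
  have hUopen : IsOpen U := by
    apply ContinuousOn.isOpen_inter_preimage _ hVopen isOpen_Iio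
    intro p hp
    obtain ⟨h1, h2, h3⟩ := hp
    apply ContinuousAt.continuousWithinAt
    apply ContinuousAt.norm
    apply ContinuousAt.sub
    · exact contAt_G m hm1 h1 h2 h3
    · have hd : DifferentiableAt ℂ (fun z => Gfun m 0 z) p.2 := by
        apply diffAt_G m 0 hm1
        · norm_num [Complex.mem_slitPlane_iff]
        · norm_num [Complex.mem_slitPlane_iff]
        · exact h3
      exact hd.continuousAt.comp continuous_snd.continuousAt
  have hsub : Set.singleton (0:ℝ) ×ˢ Metric.closedBall l₀ r ⊆ U := by
    rintro ⟨e, l⟩ ⟨he, hl⟩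
    obtain rfl : e = 0 := he
    constructor
    · refine ⟨?_, ?_, hball_slit l hl⟩
      · norm_num [Complex.mem_slitPlane_iff]
      · norm_num [Complex.mem_slitPlane_iff]
    · simp only [Set.mem_preimage, Set.mem_Iio, sub_self, norm_zero]
      linarith
  obtain ⟨u, v, huo, hvo, hu0, hvD, huv⟩ :=
    generalized_tube_lemma isCompact_singleton (isCompact_closedBall l₀ r) hUopen hsub
  obtain ⟨ε₁, hε₁pos, hballu⟩ := Metric.isOpen_iff.1 huo 0 (hu0 rfl)
  refine ⟨ε₁, hε₁pos, ?_⟩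
  intro ε hε
  have hεu : ε ∈ u := by
    apply hballu
    rw [Metric.mem_ball, Real.dist_eq, sub_zero, abs_of_pos hε.1]
    exact hε.2
  have hmemU : ∀ l ∈ Metric.closedBall l₀ r, ((ε, l) : ℝ × ℂ) ∈ U :=
    fun l hl => huv (Set.mk_mem_prod hεu (hvD hl))
  have hexists : ∃ l ∈ Metric.closedBall l₀ r, Gfun m ε l = 0 := by
    by_contra hno
    push_neg at hno
    have hd : DiffContOnCl ℂ (fun l => (Gfun m ε l)⁻¹) (Metric.ball l₀ r) := by
      apply DifferentiableOn.diffContOnCl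
      rw [closure_ball l₀ hr.ne']
      intro l hl
      obtain ⟨⟨h1, h2, h3⟩, _⟩ := hmemU l hl
      exact ((diffAt_G m ε hm1 h1 h2 h3).inv (hno l hl)).differentiableWithinAt
    have hfr : ∀ z ∈ frontier (Metric.ball l₀ r), ‖(Gfun m ε z)⁻¹‖ ≤ (δ/2)⁻¹ := by
      intro z hz
      rw [frontier_ball l₀ hr.ne'] at hz
      have hz' : z ∈ Metric.closedBall l₀ r := Metric.sphere_subset_closedBall hz
      obtain ⟨-, hnorm⟩ := hmemU z hz'
      rw [Set.mem_preimage, Set.mem_Iio] at hnorm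
      have h1 : δ ≤ ‖Gfun m 0 z‖ := hδle z hz
      have h2 : δ/2 ≤ ‖Gfun m ε z‖ := by
        have h3 := norm_sub_norm_le (Gfun m 0 z) (Gfun m ε z)
        rw [show Gfun m 0 z - Gfun m ε z = -(Gfun m ε z - Gfun m 0 z) by ring, norm_neg] at h3
        linarith
      rw [norm_inv]
      exact inv_anti₀ (by linarith) h2
    have hl₀mem : l₀ ∈ Metric.closedBall l₀ r := Metric.mem_closedBall_self hr.le
    have hle := Complex.norm_le_of_forall_mem_frontier_norm_le Metric.isBounded_ball hd hfr
      (show l₀ ∈ closure (Metric.ball l₀ r) by rw [closure_ball l₀ hr.ne']; exact hl₀mem)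
    obtain ⟨-, hnorm0⟩ := hmemU l₀ hl₀mem
    rw [Set.mem_preimage, Set.mem_Iio, hG0, sub_zero] at hnorm0
    have hne : Gfun m ε l₀ ≠ 0 := hno l₀ hl₀mem
    rw [norm_inv] at hle
    have hpos : 0 < ‖Gfun m ε l₀‖ := norm_pos_iff.mpr hne
    have h4 : (δ/2)⁻¹ < ‖Gfun m ε l₀‖⁻¹ :=
      (inv_lt_inv₀ (by linarith) hpos).mpr hnorm0
    linarith
  obtain ⟨l, hlmem, hlzero⟩ := hexists
  have hlre : 0 < l.re := by
    have := hball_re l hlmem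
    linarith
  refine ⟨l, ?_, ?_, hlre⟩
  · rintro ⟨-, hre⟩
    linarith
  · rw [dispersion_eq_G (ne_of_gt hε.1)]
    exact hlzero
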